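/- If k has characteristic zero, then every finite dimensional G-graded semisimple k-algebra is graded symmetric. -/

import Mathlib

open Module

/-- A left ideal of a `G`-graded algebra is graded if it is generated by its
homogeneous elements. -/
def IsGradedLeftIdeal {k A G : Type*} [Field k] [Ring A] [Algebra k A]
    (𝒜 : G → Submodule k A) (I : Submodule A A) : Prop :=
  I = Submodule.span A ((I : Set A) ∩ ⋃ g, (𝒜 g : Set A))

/-- A `G`-graded algebra is graded symmetric if it admits a symmetric linear functional
vanishing on all homogeneous components of degree ≠ e, whose kernel contains no
nonzero graded left ideal. -/
def IsGradedSymmetric {k A G : Type*} [Field k] [Ring A] [Algebra k A] [Group G]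
    (𝒜 : G → Submodule k A) : Prop :=
  ∃ lam : A →ₗ[k] k,
    (∀ a b : A, lam (a * b) = lam (b * a)) ∧
    (∀ g : G, g ≠ 1 → ∀ a ∈ 𝒜 g, lam a = 0) ∧
    ∀ I : Submodule A A, IsGradedLeftIdeal 𝒜 I → (∀ x ∈ I, lam x = 0) → I = ⊥

/-- A `G`-graded division algebra: a `G`-grading of `A` in which every nonzero
homogeneous element is invertible. -/
structure IsGradedDivisionAlgebra {k A G : Type*} [Field k] [Ring A] [Algebra k A]
    [Group G] [DecidableEq G] (𝒜 : G → Submodule k A) : Prop where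
  mul_mem : ∀ {g h : G} {a b : A}, a ∈ 𝒜 g → b ∈ 𝒜 h → a * b ∈ 𝒜 (g * h)
  one_mem : (1 : A) ∈ 𝒜 1
  internal : DirectSum.IsInternal 𝒜
  isUnit_of_ne_zero : ∀ g : G, ∀ a ∈ 𝒜 g, a ≠ 0 → IsUnit a

/-- In characteristic zero, every finite dimensional `G`-graded semisimple algebra
(i.e. every graded left ideal has a graded complement) is graded symmetric. -/
theorem gradedSemisimple_isGradedSymmetric_of_charZero {k A G : Type*} [Field k]
    [CharZero k] [Ring A] [Algebra k A] [Group G] [DecidableEq G] [FiniteDimensional k A]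
    (𝒜 : G → Submodule k A)
    (hmul : ∀ {g h : G} {a b : A}, a ∈ 𝒜 g → b ∈ 𝒜 h → a * b ∈ 𝒜 (g * h))
    (hone : (1 : A) ∈ 𝒜 1)
    (hinternal : DirectSum.IsInternal 𝒜)
    (hss : ∀ I : Submodule A A, IsGradedLeftIdeal 𝒜 I →
      ∃ J : Submodule A A, IsGradedLeftIdeal 𝒜 J ∧ IsCompl I J) :
    IsGradedSymmetric 𝒜 := by
  classical
  letI : DirectSum.Decomposition 𝒜 := hinternal.chooseDecomposition
  -- the projection onto the degree-one component, as a linear map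
  set π : A →ₗ[k] A :=
    (𝒜 1).subtype ∘ₗ (DirectSum.component k G (fun g => ↥(𝒜 g)) 1) ∘ₗ
      (DirectSum.decomposeLinearEquiv 𝒜).toLinearMap with hπdef
  have hπ : ∀ a : A, π a = (DirectSum.decompose 𝒜 a 1 : A) := fun a => rfl
  -- the candidate symmetrizing functional
  set lam : A →ₗ[k] k :=
    (LinearMap.trace k A) ∘ₗ (LinearMap.mul k A).flip ∘ₗ π with hlamdef
  have hflip : ∀ c : A, (LinearMap.mul k A).flip c = LinearMap.mulRight k c := by
    intro c; ext x; simp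
  have hlam : ∀ a : A,
      lam a = LinearMap.trace k A (LinearMap.mulRight k ((DirectSum.decompose 𝒜 a 1 : A))) := by
    intro a
    simp only [hlamdef, LinearMap.comp_apply, hπ, hflip]
  -- vanishing off degree one
  have hvan : ∀ g : G, g ≠ 1 → ∀ a ∈ 𝒜 g, lam a = 0 := by
    intro g hg a ha
    rw [hlam, DirectSum.decompose_of_mem_ne 𝒜 ha hg]
    simp
  have key1 : ∀ p q : G, p * q = 1 → q * p = 1 := by
    intro p q hpq
    rw [mul_eq_one_iff_eq_inv] at hpq
    subst hpq
    simp
  -- key computation: the degree-one component of x * z for homogeneous x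
  have hcomp : ∀ (g : G) (x : A), x ∈ 𝒜 g → ∀ z : A,
      x * (DirectSum.decompose 𝒜 z 1 : A) = (DirectSum.decompose 𝒜 (x * z) g : A) := by
    intro g x hx z
    have hz := DirectSum.sum_support_decompose 𝒜 z
    have hterm : ∀ h ∈ (DirectSum.decompose 𝒜 z).support,
        (DirectSum.decompose 𝒜 (x * ((DirectSum.decompose 𝒜 z h : 𝒜 h) : A)) g : A)
          = if h = 1 then x * ((DirectSum.decompose 𝒜 z h : 𝒜 h) : A) else 0 := by
      intro h _
      have hm : x * ((DirectSum.decompose 𝒜 z h : 𝒜 h) : A) ∈ 𝒜 (g * h) :=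
        hmul hx (SetLike.coe_mem _)
      by_cases h1 : h = 1
      · subst h1
        rw [if_pos rfl]
        exact DirectSum.decompose_of_mem_same 𝒜 (by rwa [mul_one] at hm)
      · rw [if_neg h1]
        exact DirectSum.decompose_of_mem_ne 𝒜 hm
          (fun e => h1 (by rwa [mul_eq_left] at e))
    conv_rhs => rw [← hz]
    rw [Finset.mul_sum, DirectSum.decompose_sum, DFinsupp.finset_sum_apply,
      AddSubmonoidClass.coe_finset_sum, Finset.sum_congr rfl hterm,
      Finset.sum_ite_eq' (DirectSum.decompose 𝒜 z).support 1]
    by_cases hs : (1 : G) ∈ (DirectSum.decompose 𝒜 z).support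
    · rw [if_pos hs]
    · rw [if_neg hs, DFinsupp.notMem_support_iff.mp hs]
      simp
  -- symmetry
  have hsymm : ∀ a b : A, lam (a * b) = lam (b * a) := by
    have hhom : ∀ (g h : G) (a b : A), a ∈ 𝒜 g → b ∈ 𝒜 h → lam (a * b) = lam (b * a) := by
      intro g h a b ha hb
      by_cases hgh : g * h = 1
      · have hhg : h * g = 1 := key1 g h hgh
        rw [hlam, hlam,
          DirectSum.decompose_of_mem_same 𝒜 (show a * b ∈ 𝒜 (1 : G) from hgh ▸ hmul ha hb),
          DirectSum.decompose_of_mem_same 𝒜 (show b * a ∈ 𝒜 (1 : G) from hhg ▸ hmul hb ha),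
          LinearMap.mulRight_mul, LinearMap.mulRight_mul,
          ← Module.End.mul_eq_comp, ← Module.End.mul_eq_comp, LinearMap.trace_mul_comm]
      · have hhg : h * g ≠ 1 := fun e => hgh (key1 h g e)
        rw [hlam, hlam, DirectSum.decompose_of_mem_ne 𝒜 (hmul ha hb) hgh,
          DirectSum.decompose_of_mem_ne 𝒜 (hmul hb ha) hhg]
    intro a
    refine DirectSum.Decomposition.inductionOn 𝒜
      (motive := fun a => ∀ b : A, lam (a * b) = lam (b * a)) ?_ ?_ ?_ a
    · intro b
      show lam (0 * b) = lam (b * 0)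
      rw [zero_mul, mul_zero]
    · intro g m b
      obtain ⟨x, hx⟩ := m
      show lam (x * b) = lam (b * x)
      refine DirectSum.Decomposition.inductionOn 𝒜
        (motive := fun b => lam (x * b) = lam (b * x)) ?_ ?_ ?_ b
      · show lam (x * 0) = lam (0 * x)
        rw [zero_mul, mul_zero]
      · intro h m'
        obtain ⟨y, hy⟩ := m'
        exact hhom g h x y hx hy
      · intro b b' hb hb'
        show lam (x * (b + b')) = lam ((b + b') * x)
        rw [mul_add, add_mul, map_add, map_add, hb, hb']
    · intro a a' ha ha' b
      show lam ((a + a') * b) = lam (b * (a + a'))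
      rw [add_mul, mul_add, map_add, map_add, ha b, ha' b]
  -- the kernel contains no nonzero graded left ideal
  have hker : ∀ I : Submodule A A, IsGradedLeftIdeal 𝒜 I → (∀ x ∈ I, lam x = 0) → I = ⊥ := by
    intro I hI h0
    obtain ⟨J, hJ, hIJ⟩ := hss I hI
    have htop : (1 : A) ∈ I ⊔ J := by rw [hIJ.sup_eq_top]; trivial
    obtain ⟨e, he, f, hf, hef⟩ := Submodule.mem_sup.mp htop
    have hdisj : ∀ x : A, x ∈ I → x ∈ J → x = 0 := fun x hxI hxJ =>
      Submodule.disjoint_def.mp hIJ.disjoint x hxI hxJ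
    have hsplit : ∀ x : A, x * e + x * f = x := fun x => by
      rw [← mul_add, hef, mul_one]
    have hmulI : ∀ x ∈ I, x * e = x := by
      intro x hx
      have hxf0 : x * f = 0 := by
        refine hdisj _ ?_ (by simpa [smul_eq_mul] using J.smul_mem x hf)
        have hxf : x * f = x - x * e := eq_sub_of_add_eq' (hsplit x)
        rw [hxf]
        exact Submodule.sub_mem I hx (by simpa [smul_eq_mul] using I.smul_mem x he)
      have h1 := hsplit x
      rwa [hxf0, add_zero] at h1
    have hmulJ : ∀ x ∈ J, x * e = 0 := by
      intro x hx
      refine hdisj _ (by simpa [smul_eq_mul] using I.smul_mem x he) ?_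
      have hxe : x * e = x - x * f := eq_sub_of_add_eq (hsplit x)
      rw [hxe]
      exact Submodule.sub_mem J hx (by simpa [smul_eq_mul] using J.smul_mem x hf)
    set e1 : A := (DirectSum.decompose 𝒜 e 1 : A) with he1def
    have hIe1 : ∀ x ∈ I, x * e1 = x := by
      have hle : I ≤ LinearMap.ker (LinearMap.toSpanSingleton A A e1 - LinearMap.id) := by
        nth_rewrite 1 [hI]
        rw [Submodule.span_le]
        rintro x ⟨hxI, hxU⟩
        obtain ⟨g, hxg⟩ := Set.mem_iUnion.mp hxU
        have hx1 : x * e1 = x := by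
          rw [he1def, hcomp g x hxg e, hmulI x hxI, DirectSum.decompose_of_mem_same 𝒜 hxg]
        simp only [SetLike.mem_coe, LinearMap.mem_ker, LinearMap.sub_apply,
          LinearMap.toSpanSingleton_apply, LinearMap.id_apply, smul_eq_mul, hx1, sub_self]
      intro x hx
      have hmem := hle hx
      rw [LinearMap.mem_ker, LinearMap.sub_apply, LinearMap.toSpanSingleton_apply,
        LinearMap.id_apply, sub_eq_zero, smul_eq_mul] at hmem
      exact hmem
    have hJe1 : ∀ x ∈ J, x * e1 = 0 := by
      have hle : J ≤ LinearMap.ker (LinearMap.toSpanSingleton A A e1) := by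
        nth_rewrite 1 [hJ]
        rw [Submodule.span_le]
        rintro x ⟨hxJ, hxU⟩
        obtain ⟨g, hxg⟩ := Set.mem_iUnion.mp hxU
        have hx0 : x * e1 = 0 := by
          rw [he1def, hcomp g x hxg e, hmulJ x hxJ]
          simp
        simpa [LinearMap.mem_ker, LinearMap.toSpanSingleton_apply, smul_eq_mul] using hx0
      intro x hx
      simpa [LinearMap.mem_ker, LinearMap.toSpanSingleton_apply, smul_eq_mul] using hle hx
    have hproj : LinearMap.IsProj (I.restrictScalars k) (LinearMap.mulRight k e1) := by
      refine ⟨fun x => ?_, fun x hx => ?_⟩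
      · obtain ⟨i, hi, j, hj, hij⟩ := Submodule.mem_sup.mp
          (show x ∈ I ⊔ J by rw [hIJ.sup_eq_top]; trivial)
        rw [LinearMap.mulRight_apply, ← hij, add_mul, hIe1 i hi, hJe1 j hj, add_zero]
        exact hi
      · rw [LinearMap.mulRight_apply]
        exact hIe1 x hx
    have htr := hproj.trace
    have h0e : lam e = 0 := h0 e he
    rw [hlam e, ← he1def, htr] at h0e
    have hfr : finrank k (I.restrictScalars k) = 0 := by exact_mod_cast h0e
    have hbot : I.restrictScalars k = ⊥ := Submodule.finrank_eq_zero.mp hfr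
    apply Submodule.restrictScalars_injective k A A
    simpa using hbot
  exact ⟨lam, hsymm, hvan, hker⟩
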